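/- Let 𝔞_1,…,𝔞_N be finitely many holomorphic functions on X(R,δ) of the form 𝔞_p(w)=√−1·w+Σ_{κ∈S_p}c_{p,κ}·w^κ, where each S_p⊂(0,1) is finite and c_{p,κ}∈ℂ. Let ε∈(0,1) satisfy κ<1−ε for every κ∈⋃_pS_p, let A∈ℂ satisfy Re(√−1·A)>0 and Re(√−1·A·e^{√−1(1−ε)π})>0, and set g(w)=w+A·w^{1−ε}. Then there exist positive numbers R_2>R_1>R and C_1>0 such that: (i) Re(𝔞_p(w)) − Re(√−1·g(w)) < −C_1|w|^{1−ε} for every p=1,…,N and every w with |w|≥R_1 and Im w≥0; and (ii) {w∈X(R,δ): |g(w)|>R_2, Im g(w)≥0} ⊆ {w∈ℂ: |w|≥R_1, Im w≥0}. -/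

import Mathlib

/-- The branch of `log` on the sector around the positive imaginary axis:
`log w = log(-i w) + iπ/2`. -/
noncomputable def logS (w : ℂ) : ℂ :=
  Complex.log (-Complex.I * w) + (Real.pi / 2 : ℝ) * Complex.I

/-- The branch of the power `w ^ κ = exp (κ log w)` on the sector around the
positive imaginary axis. -/
noncomputable def powS (w : ℂ) (κ : ℝ) : ℂ := Complex.exp ((κ : ℂ) * logS w)

/-- The sector `X(R,δ) = {w : |w| > R, arg w ∈ (-δ, π + δ)}` around the positive
imaginary axis. -/
def sectorX (R δ : ℝ) : Set ℂ :=
  {w : ℂ | R < ‖w‖ ∧ |Complex.arg (-Complex.I * w)| < Real.pi / 2 + δ}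

lemma powS_eq (w : ℂ) (hw : w ≠ 0) (κ : ℝ) :
    powS w κ = (‖w‖ ^ κ : ℝ) *
      Complex.exp ((κ * (Complex.arg (-Complex.I * w) + Real.pi / 2) : ℝ) * Complex.I) := by
  have hw' : ‖w‖ ≠ 0 := by simpa using hw
  have habs : ‖-Complex.I * w‖ = ‖w‖ := by
    simp
  have : (κ : ℂ) * logS w
      = (κ * Real.log (‖w‖) : ℝ)
        + ((κ * (Complex.arg (-Complex.I * w) + Real.pi / 2) : ℝ)) * Complex.I := by
    rw [logS, Complex.log, habs]
    push_cast
    ring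
  rw [powS, this, Complex.exp_add, ← Complex.ofReal_exp,
    Real.rpow_def_of_pos (by positivity : (0:ℝ) < ‖w‖), mul_comm (Real.log _)]

lemma abs_powS (w : ℂ) (hw : w ≠ 0) (κ : ℝ) :
    ‖powS w κ‖ = ‖w‖ ^ κ := by
  rw [powS_eq w hw, norm_mul, Complex.norm_real, Real.norm_eq_abs, Complex.norm_exp_ofReal_mul_I, mul_one,
    abs_of_nonneg (Real.rpow_nonneg (norm_nonneg w) κ)]

lemma re_rot (B : ℂ) (φ : ℝ) :
    (B * Complex.exp ((φ:ℂ) * Complex.I)).re = B.re * Real.cos φ - B.im * Real.sin φ := by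
  simp [Complex.exp_mul_I, Complex.mul_re, Complex.add_re, Complex.add_im,
    Complex.mul_im, Complex.cos_ofReal_re, Complex.sin_ofReal_re]

lemma pos_on_interval (B : ℂ) (L : ℝ) (hL0 : 0 < L) (hLπ : L < Real.pi)
    (h0 : 0 < B.re) (hL : 0 < (B * Complex.exp ((L:ℂ) * Complex.I)).re) :
    ∀ φ ∈ Set.Icc (0:ℝ) L, 0 < (B * Complex.exp ((φ:ℂ) * Complex.I)).re := by
  intro φ hφ
  obtain ⟨hφ0, hφL⟩ := hφ
  rw [re_rot] at hL ⊢
  have hsinL : 0 < Real.sin L := Real.sin_pos_of_pos_of_lt_pi hL0 hLπ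
  have key : (B.re * Real.cos φ - B.im * Real.sin φ) * Real.sin L
      = Real.sin (L - φ) * B.re + Real.sin φ * (B.re * Real.cos L - B.im * Real.sin L) := by
    rw [Real.sin_sub]; ring
  rcases eq_or_lt_of_le hφ0 with h | h
  · simp [← h, h0]
  · have hsinφ : 0 < Real.sin φ := Real.sin_pos_of_pos_of_lt_pi h (lt_of_le_of_lt hφL hLπ)
    have hsinLφ : 0 ≤ Real.sin (L - φ) := Real.sin_nonneg_of_nonneg_of_le_pi
      (by linarith) (by linarith)
    nlinarith [mul_nonneg hsinLφ h0.le, mul_pos hsinφ hL]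

set_option maxHeartbeats 2000000 in
/-- choice of a coordinate `g = w + A w^{1-ε}` dominating the
exponents `𝔞_p`. -/
theorem coordinate_choice_dominates
    (R δ : ℝ) (hR : 0 < R) (hδ0 : 0 < δ) (hδ : δ < Real.pi / 2)
    (N : ℕ) (S : Fin N → Finset ℝ)
    (hS : ∀ p : Fin N, ∀ κ ∈ S p, 0 < κ ∧ κ < 1)
    (c : Fin N → ℝ → ℂ)
    (ε : ℝ) (hε0 : 0 < ε) (hε1 : ε < 1)
    (hεS : ∀ p : Fin N, ∀ κ ∈ S p, κ < 1 - ε)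
    (A : ℂ) (hA1 : 0 < (Complex.I * A).re)
    (hA2 : 0 < (Complex.I * A * Complex.exp ((((1 - ε) * Real.pi : ℝ)) * Complex.I)).re)
    (aa : Fin N → ℂ → ℂ)
    (haa : ∀ (p : Fin N) (w : ℂ), aa p w = Complex.I * w + ∑ κ ∈ S p, c p κ * powS w κ)
    (g : ℂ → ℂ) (hg : ∀ w : ℂ, g w = w + A * powS w (1 - ε)) :
    ∃ R₁ R₂ C₁ : ℝ, R < R₁ ∧ R₁ < R₂ ∧ 0 < C₁ ∧
      (∀ (p : Fin N) (w : ℂ), R₁ ≤ ‖w‖ → 0 ≤ w.im →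
        (aa p w).re - (Complex.I * g w).re < -C₁ * ‖w‖ ^ (1 - ε)) ∧
      (∀ w ∈ sectorX R δ, R₂ < ‖g w‖ → 0 ≤ (g w).im →
        R₁ ≤ ‖w‖ ∧ 0 ≤ w.im) := by
  classical
  have hπ := Real.pi_pos
  have hε1' : (0:ℝ) < 1 - ε := by linarith
  set L : ℝ := (1 - ε) * Real.pi with hLdef
  have hL0 : 0 < L := mul_pos hε1' hπ
  have hLπ : L < Real.pi := by
    have h' : 0 < ε * Real.pi := mul_pos hε0 hπ
    rw [hLdef]
    linarith only [h']
  -- the minimum c₀ of Re (I A e^{iφ}) over φ ∈ [0, L]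
  have hf_cont : Continuous (fun φ : ℝ => (Complex.I * A * Complex.exp ((φ:ℂ) * Complex.I)).re) := by
    apply Complex.continuous_re.comp
    exact continuous_const.mul (Complex.continuous_exp.comp
      (Complex.continuous_ofReal.mul continuous_const))
  obtain ⟨φ₀, hφ₀mem, hφ₀min⟩ := isCompact_Icc.exists_isMinOn
    (⟨0, le_refl 0, hL0.le⟩ : (Set.Icc (0:ℝ) L).Nonempty) hf_cont.continuousOn
  set c₀ : ℝ := (Complex.I * A * Complex.exp ((φ₀:ℂ) * Complex.I)).re with hc₀def
  have hc₀pos : 0 < c₀ :=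
    pos_on_interval (Complex.I * A) L hL0 hLπ hA1 hA2 φ₀ hφ₀mem
  have hc₀le : ∀ φ ∈ Set.Icc (0:ℝ) L,
      c₀ ≤ (Complex.I * A * Complex.exp ((φ:ℂ) * Complex.I)).re :=
    isMinOn_iff.mp hφ₀min
  -- the function Im (A e^{i(1-ε)θ}), negative near θ = 0 and θ = π
  set hIm : ℝ → ℝ := fun θ => (A * Complex.exp ((((1 - ε) * θ : ℝ)) * Complex.I)).im
    with hImdef
  have hIm_cont : Continuous hIm := by
    apply Complex.continuous_im.comp
    exact continuous_const.mul (Complex.continuous_exp.comp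
      (Complex.continuous_ofReal.mul continuous_const |>.comp
        (continuous_const.mul continuous_id)))
  have hAim : A.im < 0 := by
    have : (Complex.I * A).re = -A.im := by simp [Complex.mul_re]
    rw [this] at hA1; linarith
  have hIm0 : hIm 0 < 0 := by
    have : hIm 0 = A.im := by simp [hImdef]
    rw [this]; exact hAim
  have hImπ : hIm Real.pi < 0 := by
    have h := hA2
    rw [mul_assoc] at h
    have h2 : (Complex.I * (A * Complex.exp ((((1 - ε) * Real.pi : ℝ)) * Complex.I))).re
        = -(A * Complex.exp ((((1 - ε) * Real.pi : ℝ)) * Complex.I)).im := by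
      simp [Complex.mul_re]
    rw [h2] at h
    have : hIm Real.pi = (A * Complex.exp ((((1 - ε) * Real.pi : ℝ)) * Complex.I)).im := rfl
    rw [this]; linarith
  obtain ⟨r₀, hr₀pos, hr₀⟩ := Metric.eventually_nhds_iff.mp
    (hIm_cont.continuousAt.eventually_lt_const hIm0)
  obtain ⟨r₁, hr₁pos, hr₁⟩ := Metric.eventually_nhds_iff.mp
    (hIm_cont.continuousAt.eventually_lt_const hImπ)
  set η : ℝ := min (min (r₀/2) (r₁/2)) (min (δ/2) (Real.pi/4)) with hηdef
  have hη0 : 0 < η := by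
    apply lt_min (lt_min (by linarith) (by linarith)) (lt_min (by linarith) (by linarith))
  have hηδ : η < δ := lt_of_le_of_lt ((min_le_right _ _).trans (min_le_left _ _)) (by linarith)
  have hηπ : η < Real.pi / 2 :=
    lt_of_le_of_lt ((min_le_right _ _).trans (min_le_right _ _)) (by linarith)
  have hηr₀ : η < r₀ := lt_of_le_of_lt ((min_le_left _ _).trans (min_le_left _ _)) (by linarith)
  have hηr₁ : η < r₁ := lt_of_le_of_lt ((min_le_left _ _).trans (min_le_right _ _)) (by linarith)
  have hsinη : 0 < Real.sin η := Real.sin_pos_of_pos_of_lt_pi hη0 (by linarith)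
  -- the maximal exponent κ₀ and the total coefficient mass M
  set T : Finset ℝ := Finset.univ.biUnion S with hTdef
  set κ₀ : ℝ := if h : T.Nonempty then T.max' h else (1 - ε)/2 with hκ₀def
  have hTmem : ∀ p : Fin N, ∀ κ ∈ S p, κ ∈ T := by
    intro p κ hκ
    rw [hTdef]
    exact Finset.mem_biUnion.mpr ⟨p, Finset.mem_univ p, hκ⟩
  have hκ₀lt : κ₀ < 1 - ε := by
    rw [hκ₀def]
    split_ifs with h
    · obtain ⟨p, _, hp⟩ := Finset.mem_biUnion.mp (T.max'_mem h)
      exact hεS p _ hp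
    · linarith
  have hκ₀ge : ∀ p : Fin N, ∀ κ ∈ S p, κ ≤ κ₀ := by
    intro p κ hκ
    rw [hκ₀def]
    have hne : T.Nonempty := ⟨κ, hTmem p κ hκ⟩
    rw [dif_pos hne]
    exact T.le_max' κ (hTmem p κ hκ)
  set M : ℝ := ∑ p : Fin N, ∑ κ ∈ S p, ‖c p κ‖ with hMdef
  have hMp : ∀ p : Fin N, (∑ κ ∈ S p, ‖c p κ‖) ≤ M := by
    intro p
    apply Finset.single_le_sum (f := fun q => ∑ κ ∈ S q, ‖c q κ‖)
      (fun q _ => Finset.sum_nonneg fun κ _ => norm_nonneg _) (Finset.mem_univ p)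
  have hAabs : 0 < ‖A‖ := by
    simp only [norm_pos_iff]
    intro h; rw [h] at hAim; simp at hAim
  -- choice of R₁
  have e1 : Filter.Tendsto (fun r : ℝ => M * r ^ (κ₀ - (1 - ε))) Filter.atTop (nhds 0) := by
    have h := (tendsto_rpow_neg_atTop (show (0:ℝ) < (1 - ε) - κ₀ by linarith)).const_mul M
    rw [mul_zero] at h
    have : (fun r : ℝ => M * r ^ (κ₀ - (1 - ε))) = fun r : ℝ => M * r ^ (-((1 - ε) - κ₀)) := by
      funext r; ring_nf
    rw [this]; exact h
  have e1' : ∀ᶠ r in Filter.atTop, M * r ^ (κ₀ - (1 - ε)) < c₀/2 :=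
    e1.eventually_lt_const (half_pos hc₀pos)
  have e2 : ∀ᶠ r in Filter.atTop, 2 * ‖A‖ / Real.sin η ≤ r ^ ε :=
    (tendsto_rpow_atTop hε0).eventually_ge_atTop _
  have e3 : ∀ᶠ r in Filter.atTop, max R 1 < r := Filter.eventually_gt_atTop _
  obtain ⟨a₀, ha₀⟩ := Filter.eventually_atTop.mp ((e1'.and e2).and e3)
  set R₁ : ℝ := max a₀ (max R 1 + 1) with hR₁def
  have hP : ∀ r : ℝ, R₁ ≤ r →
      (M * r ^ (κ₀ - (1 - ε)) < c₀/2 ∧ 2 * ‖A‖ / Real.sin η ≤ r ^ ε) ∧ max R 1 < r :=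
    fun r hr => ha₀ r (le_trans (le_max_left _ _) hr)
  have hRR₁ : R < R₁ := by
    have h1 : max R 1 + 1 ≤ R₁ := le_max_right _ _
    have h2 : R ≤ max R 1 := le_max_left _ _
    linarith
  have hR₁1 : 1 < R₁ := by
    have h1 : max R 1 + 1 ≤ R₁ := le_max_right _ _
    have h2 : (1:ℝ) ≤ max R 1 := le_max_right _ _
    linarith
  set R₂ : ℝ := (1 + ‖A‖) * R₁ with hR₂def
  have hR₁₂ : R₁ < R₂ := by
    rw [hR₂def]
    have h' : 0 < ‖A‖ * R₁ := mul_pos hAabs (by linarith only [hR₁1])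
    linarith only [h', hR₁1]
  refine ⟨R₁, R₂, c₀/2, hRR₁, hR₁₂, half_pos hc₀pos, ?_, ?_⟩
  · -- Part (i)
    intro p w hw hwim
    have hrpos : 0 < ‖w‖ := by linarith
    have hw0 : w ≠ 0 := by
      intro h; rw [h] at hrpos; simp at hrpos
    have hwabs1 : 1 ≤ ‖w‖ := by linarith
    set r : ℝ := ‖w‖ with hrdef
    set a : ℝ := Complex.arg (-Complex.I * w) with hadef
    have hare : (-Complex.I * w).re = w.im := by
      simp [Complex.mul_re]
    have haθ : |a| ≤ Real.pi/2 := by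
      rw [hadef]
      exact Complex.abs_arg_le_pi_div_two_iff.mpr (by rw [hare]; exact hwim)
    have haθ' : -(Real.pi/2) ≤ a ∧ a ≤ Real.pi/2 := abs_le.mp haθ
    -- the A-term
    have hφmem : (1 - ε) * (a + Real.pi/2) ∈ Set.Icc (0:ℝ) L := by
      constructor
      · apply mul_nonneg (by linarith) (by linarith [haθ'.1])
      · rw [hLdef]
        apply mul_le_mul_of_nonneg_left (by linarith [haθ'.2]) (by linarith)
    have hA_term : (Complex.I * A * powS w (1 - ε)).re
        = r ^ (1 - ε) * (Complex.I * A *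
            Complex.exp ((((1 - ε) * (a + Real.pi/2) : ℝ)) * Complex.I)).re := by
      rw [powS_eq w hw0, ← hadef, ← hrdef,
        show Complex.I * A * ((r ^ (1 - ε) : ℝ) *
          Complex.exp ((((1 - ε) * (a + Real.pi/2) : ℝ)) * Complex.I))
          = ((r ^ (1 - ε) : ℝ) : ℂ) * (Complex.I * A *
            Complex.exp ((((1 - ε) * (a + Real.pi/2) : ℝ)) * Complex.I)) by ring,
        Complex.re_ofReal_mul]
    have hrpow_pos : 0 < r ^ (1 - ε) := Real.rpow_pos_of_pos hrpos _
    have hA_term_ge : c₀ * r ^ (1 - ε) ≤ (Complex.I * A * powS w (1 - ε)).re := by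
      rw [hA_term, mul_comm (c₀)]
      exact mul_le_mul_of_nonneg_left (hc₀le _ hφmem) hrpow_pos.le
    -- the sum term
    have hsum : (∑ κ ∈ S p, c p κ * powS w κ).re ≤ M * r ^ κ₀ := by
      calc (∑ κ ∈ S p, c p κ * powS w κ).re
          ≤ ‖∑ κ ∈ S p, c p κ * powS w κ‖ := Complex.re_le_norm _
        _ ≤ ∑ κ ∈ S p, ‖c p κ * powS w κ‖ := norm_sum_le _ _
        _ ≤ ∑ κ ∈ S p, ‖c p κ‖ * r ^ κ₀ := by
            apply Finset.sum_le_sum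
            intro κ hκ
            rw [norm_mul, abs_powS w hw0]
            exact mul_le_mul_of_nonneg_left
              (Real.rpow_le_rpow_of_exponent_le hwabs1 (hκ₀ge p κ hκ))
              (norm_nonneg _)
        _ = (∑ κ ∈ S p, ‖c p κ‖) * r ^ κ₀ := (Finset.sum_mul _ _ _).symm
        _ ≤ M * r ^ κ₀ := mul_le_mul_of_nonneg_right (hMp p)
            (Real.rpow_nonneg hrpos.le _)
    have hM' : M * r ^ κ₀ < c₀/2 * r ^ (1 - ε) := by
      have h := ((hP r hw).1).1
      have hsplit : r ^ κ₀ = r ^ (κ₀ - (1 - ε)) * r ^ (1 - ε) := by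
        rw [← Real.rpow_add hrpos]; ring_nf
      rw [hsplit, ← mul_assoc]
      exact mul_lt_mul_of_pos_right h hrpow_pos
    -- put it together
    rw [haa, hg]
    have expand : Complex.I * (w + A * powS w (1 - ε))
        = Complex.I * w + Complex.I * A * powS w (1 - ε) := by ring
    rw [expand, Complex.add_re, Complex.add_re]
    have hneg : -(c₀/2) * r ^ (1 - ε) = -(c₀/2 * r ^ (1 - ε)) := by ring
    linarith only [hsum, hA_term_ge, hM', hneg]
  · -- Part (ii)
    intro w hw hgw hgim
    obtain ⟨hwR, hwarg⟩ := hw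
    have hrpos : 0 < ‖w‖ := lt_trans hR hwR
    have hw0 : w ≠ 0 := by
      intro h; rw [h] at hrpos; simp at hrpos
    set r : ℝ := ‖w‖ with hrdef
    -- first claim: R₁ ≤ |w|
    have h1 : R₁ ≤ r := by
      by_contra hcon
      push_neg at hcon
      have habsg : ‖g w‖ ≤ r + ‖A‖ * r ^ (1 - ε) := by
        rw [hg]
        refine le_trans (norm_add_le _ _) ?_
        rw [norm_mul, abs_powS w hw0]
      have b1 : r ^ (1 - ε) ≤ R₁ ^ (1 - ε) :=
        Real.rpow_le_rpow hrpos.le hcon.le (by linarith)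
      have b2 : R₁ ^ (1 - ε) ≤ R₁ := by
        calc R₁ ^ (1 - ε) ≤ R₁ ^ (1:ℝ) :=
              Real.rpow_le_rpow_of_exponent_le (by linarith) (by linarith)
          _ = R₁ := Real.rpow_one _
      have : ‖g w‖ ≤ R₂ := by
        rw [hR₂def]
        have h' := mul_le_mul_of_nonneg_left (b1.trans b2) (norm_nonneg A)
        linarith only [habsg, h', hcon]
      linarith only [this, hgw]
    refine ⟨h1, ?_⟩
    -- second claim: 0 ≤ Im w
    by_contra hcon
    push_neg at hcon
    set a : ℝ := Complex.arg (-Complex.I * w) with hadef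
    have hare : (-Complex.I * w).re = w.im := by
      simp [Complex.mul_re]
    have hIw0 : -Complex.I * w ≠ 0 := by
      simp [hw0, Complex.I_ne_zero]
    have hcos : Real.cos a = w.im / r := by
      rw [hadef]
      have := Complex.cos_arg hIw0
      rwa [hare, (by simp : ‖-Complex.I * w‖ = ‖w‖)] at this
    have hwim_eq : w.im = r * Real.cos a := by
      rw [hcos]; field_simp
    have hcosneg : Real.cos a < 0 := by
      rw [hcos]
      exact div_neg_of_neg_of_pos hcon hrpos
    have haπ2 : Real.pi/2 < |a| := by
      by_contra h
      push_neg at h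
      have := Complex.abs_arg_le_pi_div_two_iff.mp h
      rw [hare] at this
      linarith
    -- Im (g w) decomposition
    have hgim' : (g w).im = w.im + r ^ (1 - ε) *
        (A * Complex.exp ((((1 - ε) * (a + Real.pi/2) : ℝ)) * Complex.I)).im := by
      rw [hg, Complex.add_im, powS_eq w hw0, ← hadef, ← hrdef,
        show A * ((r ^ (1 - ε) : ℝ) *
          Complex.exp ((((1 - ε) * (a + Real.pi/2) : ℝ)) * Complex.I))
          = ((r ^ (1 - ε) : ℝ) : ℂ) *
            (A * Complex.exp ((((1 - ε) * (a + Real.pi/2) : ℝ)) * Complex.I)) by ring,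
        Complex.im_ofReal_mul]
    have hrpow_pos : 0 < r ^ (1 - ε) := Real.rpow_pos_of_pos hrpos _
    rcases le_or_gt |a| (Real.pi/2 + η) with hcase | hcase
    · -- case A: θ = a + π/2 is within η of 0 or of π
      have hImθ : hIm (a + Real.pi/2) < 0 := by
        rcases abs_cases a with ⟨heq, hsgn⟩ | ⟨heq, hsgn⟩
        · -- a ≥ 0, so a > π/2, θ close to π
          rw [heq] at hcase haπ2
          apply hr₁
          rw [Real.dist_eq]
          have : |a + Real.pi/2 - Real.pi| = a - Real.pi/2 := by
            rw [abs_of_nonneg (by linarith)]; ring_nf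
          rw [show a + Real.pi/2 - Real.pi = a - Real.pi/2 by ring,
            abs_of_nonneg (by linarith)]
          linarith
        · -- a < 0, so a < -π/2, θ close to 0
          rw [heq] at hcase haπ2
          apply hr₀
          rw [Real.dist_eq, sub_zero, abs_of_nonpos (by linarith)]
          linarith
      have : (g w).im < 0 := by
        rw [hgim']
        have : r ^ (1 - ε) * hIm (a + Real.pi/2) < 0 :=
          mul_neg_of_pos_of_neg hrpow_pos hImθ
        have hImeq : (A * Complex.exp ((((1 - ε) * (a + Real.pi/2) : ℝ)) * Complex.I)).im
            = hIm (a + Real.pi/2) := rfl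
        rw [hImeq]
        linarith only [this, hcon]
      linarith only [this, hgim]
    · -- case B: |a| - π/2 > η, so cos a ≤ -sin η and Im w very negative
      have hcos2 : Real.cos a < -Real.sin η := by
        rw [← Real.cos_abs]
        have ht : |a| = Real.pi/2 + (|a| - Real.pi/2) := by ring
        rw [ht, show Real.pi/2 + (|a| - Real.pi/2) = (|a| - Real.pi/2) + Real.pi/2 by ring,
          Real.cos_add_pi_div_two]
        have hsin : Real.sin η < Real.sin (|a| - Real.pi/2) := by
          apply Real.strictMonoOn_sin
          · constructor <;> [linarith; linarith]
          · constructor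
            · linarith
            · linarith only [hwarg, hδ]
          · linarith
        linarith
      have hImbound : (A * Complex.exp ((((1 - ε) * (a + Real.pi/2) : ℝ)) * Complex.I)).im
          ≤ ‖A‖ := by
        refine le_trans (le_abs_self _) ?_
        refine le_trans (Complex.abs_im_le_norm _) ?_
        rw [norm_mul, Complex.norm_exp_ofReal_mul_I, mul_one]
      have hA_small : ‖A‖ * r ^ (1 - ε) ≤ Real.sin η / 2 * r := by
        have h := ((hP r h1).1).2
        rw [div_le_iff₀ hsinη] at h
        have h2 := mul_le_mul_of_nonneg_right h hrpow_pos.le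
        have h3 : r ^ ε * r ^ (1 - ε) = r := by
          rw [← Real.rpow_add hrpos]; norm_num
        have h4 : Real.sin η * (r ^ ε * r ^ (1 - ε)) = Real.sin η * r := by rw [h3]
        linarith only [h2, h4]
      have : (g w).im < 0 := by
        rw [hgim', hwim_eq]
        have hrc : r * Real.cos a ≤ r * (-Real.sin η) :=
          (mul_lt_mul_of_pos_left hcos2 hrpos).le
        have h4 : r ^ (1 - ε) *
            (A * Complex.exp ((((1 - ε) * (a + Real.pi/2) : ℝ)) * Complex.I)).im
            ≤ r ^ (1 - ε) * ‖A‖ :=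
          mul_le_mul_of_nonneg_left hImbound hrpow_pos.le
        linarith only [hrc, h4, hA_small, mul_pos hsinη hrpos]
      linarith only [this, hgim]
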